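/- arXiv:2202.08587 — 4 statements merged into one kernel-verified Lean document; each statement's English description precedes it below -/
import Mathlib

section
/- Let f : ℝⁿ → ℝ be differentiable at θ, and let v be an ℝⁿ-valued random vector with independent components of mean 0 and variance 1. Then the forward gradient g(θ) = (∇f(θ) · v) v is an unbiased estimator of the gradient: E[g(θ)] = ∇f(θ). -/
open MeasureTheory ProbabilityTheory

/-- If `f : ℝⁿ → ℝ` is differentiable at `θ` and `v` is a random vector with
independent components of mean 0 and variance 1, then the forward gradient
`g(θ) = (∇f(θ) · v) v` is an unbiased estimator of the gradient `∇f(θ)`.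
Here `∇f(θ) · v` is the directional derivative `fderiv ℝ f θ (v ω)`. -/
theorem forward_gradient_unbiased
    {Ω : Type*} [MeasurableSpace Ω] {μ : Measure Ω} [IsProbabilityMeasure μ]
    {n : ℕ} (f : EuclideanSpace ℝ (Fin n) → ℝ) (θ : EuclideanSpace ℝ (Fin n))
    (hf : DifferentiableAt ℝ f θ)
    (v : Ω → EuclideanSpace ℝ (Fin n))
    (hmeas : ∀ i, Measurable fun ω => v ω i)
    (hL2 : ∀ i, MemLp (fun ω => v ω i) 2 μ)
    (hindep : iIndepFun (m := fun _ => Real.measurableSpace) (fun i ω => v ω i) μ)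
    (hmean : ∀ i, ∫ ω, v ω i ∂μ = 0)
    (hvar : ∀ i, ∫ ω, (v ω i) ^ 2 ∂μ = 1) :
    ∀ i, ∫ ω, (fderiv ℝ f θ (v ω)) * v ω i ∂μ = gradient f θ i := by
  intro i
  set L := fderiv ℝ f θ with hL
  have hrepr : ∀ y : EuclideanSpace ℝ (Fin n),
      L y = ∑ j, y j * L (EuclideanSpace.single j 1) := by
    intro y
    have hy : y = ∑ j, y j • EuclideanSpace.single j (1 : ℝ) := by
      have := (EuclideanSpace.basisFun (Fin n) ℝ).sum_repr y
      simpa [EuclideanSpace.basisFun_apply, EuclideanSpace.basisFun_repr] using this.symm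
    conv_lhs => rw [hy]
    rw [map_sum]
    simp [smul_eq_mul]
  have hint : ∀ j, Integrable (fun ω => v ω j * v ω i) μ := by
    intro j
    rcases eq_or_ne j i with rfl | hji
    · simpa [sq] using (hL2 j).integrable_sq
    · exact (hindep.indepFun hji).integrable_mul ((hL2 j).integrable one_le_two)
        ((hL2 i).integrable one_le_two)
  have key : ∀ j, ∫ ω, v ω j * v ω i ∂μ = if j = i then 1 else 0 := by
    intro j
    rcases eq_or_ne j i with rfl | hji
    · simpa [sq] using hvar j
    · rw [if_neg hji]
      have h := (hindep.indepFun hji).integral_mul_eq_mul_integral ((hL2 j)).aestronglyMeasurable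
        ((hL2 i)).aestronglyMeasurable
      calc ∫ ω, v ω j * v ω i ∂μ = (∫ ω, v ω j ∂μ) * ∫ ω, v ω i ∂μ := h
        _ = 0 := by rw [hmean j, zero_mul]
  have hgrad : L (EuclideanSpace.single i 1) = gradient f θ i := by
    have h := InnerProductSpace.toDual_symm_apply (𝕜 := ℝ)
      (x := EuclideanSpace.single i (1 : ℝ)) (y := L)
    rw [EuclideanSpace.inner_single_right] at h
    simpa [gradient] using h.symm
  calc ∫ ω, L (v ω) * v ω i ∂μ
      = ∫ ω, ∑ j, L (EuclideanSpace.single j 1) * (v ω j * v ω i) ∂μ := by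
        refine integral_congr_ae (Filter.Eventually.of_forall fun ω => ?_)
        dsimp only
        rw [hrepr (v ω), Finset.sum_mul]
        exact Finset.sum_congr rfl fun j _ => by ring
    _ = ∑ j, ∫ ω, L (EuclideanSpace.single j 1) * (v ω j * v ω i) ∂μ :=
        integral_finset_sum _ fun j _ => ((hint j).const_mul _)
    _ = ∑ j, L (EuclideanSpace.single j 1) * (if j = i then 1 else 0) := by
        refine Finset.sum_congr rfl fun j _ => ?_
        rw [integral_const_mul, key j]
    _ = L (EuclideanSpace.single i 1) := by simp
    _ = gradient f θ i := hgrad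
end

section
/- For a ∈ ℝⁿ fixed and v with independent components of mean 0, variance 1, and finite fourth moment E[v_i⁴] = m₄ (same for all i), the second moment of the i-th component of the forward gradient g = (a·v)v is E[g_i²] = m₄ a_i² + Σ_{j≠i} a_j² (in particular Var[g_i] = (m₄−1) a_i² + Σ_{j≠i} a_j²). -/
open MeasureTheory ProbabilityTheory
open scoped ENNReal

private lemma fg_halfq : (1:ℝ≥0∞)/2 = 1/4 + 1/4 := by
  rw [ENNReal.div_add_div_same]
  rw [show (4:ℝ≥0∞) = 2*2 by norm_num, ENNReal.div_eq_div_iff] <;> norm_num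

private lemma fg_oneq : (1:ℝ≥0∞)/1 = 1/2 + 1/2 := by
  rw [ENNReal.div_add_div_same, ENNReal.div_eq_div_iff] <;> norm_num

/-- For `a ∈ ℝⁿ` fixed and `v` with independent components of mean 0,
variance 1, vanishing third moment and fourth moment `m₄`, the `i`-th
component `g_i = (a·v) v_i` of the forward gradient satisfies
`E[g_i²] = m₄ a_i² + Σ_{j≠i} a_j²` and
`Var[g_i] = (m₄ − 1) a_i² + Σ_{j≠i} a_j²`. -/
theorem forward_gradient_second_moment
    {Ω : Type*} [MeasurableSpace Ω] {μ : Measure Ω} [IsProbabilityMeasure μ]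
    {n : ℕ} (a : Fin n → ℝ) (v : Ω → Fin n → ℝ) (m₄ : ℝ)
    (hmeas : ∀ i, Measurable fun ω => v ω i)
    (hL4 : ∀ i, MemLp (fun ω => v ω i) 4 μ)
    (hindep : iIndepFun (m := fun _ => Real.measurableSpace) (fun i ω => v ω i) μ)
    (hmean : ∀ i, ∫ ω, v ω i ∂μ = 0)
    (hvar : ∀ i, ∫ ω, (v ω i) ^ 2 ∂μ = 1)
    (hthird : ∀ i, ∫ ω, (v ω i) ^ 3 ∂μ = 0)
    (hfourth : ∀ i, ∫ ω, (v ω i) ^ 4 ∂μ = m₄) :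
    ∀ i, (∫ ω, ((∑ j, a j * v ω j) * v ω i) ^ 2 ∂μ
            = m₄ * (a i) ^ 2 + ∑ j ∈ Finset.univ.erase i, (a j) ^ 2)
      ∧ (variance (fun ω => (∑ j, a j * v ω j) * v ω i) μ
            = (m₄ - 1) * (a i) ^ 2 + ∑ j ∈ Finset.univ.erase i, (a j) ^ 2) := by
  classical
  have hAES : ∀ j, AEStronglyMeasurable (fun ω => v ω j) μ :=
    fun j => (hmeas j).aestronglyMeasurable
  have hL2 : ∀ j k, MemLp (fun ω => v ω j * v ω k) 2 μ := fun j k => by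
    have := (hL4 k).smul (hL4 j) (hpqr := ⟨by have := fg_halfq; simp only [one_div] at this; exact this.symm⟩)
    simpa [smul_eq_mul, Pi.mul_def] using this
  have hInt4 : ∀ p q r s : Fin n,
      Integrable (fun ω => (v ω p * v ω q) * (v ω r * v ω s)) μ := by
    intro p q r s
    rw [← memLp_one_iff_integrable]
    have := (hL2 r s).smul (hL2 p q) (hpqr := ⟨by have := fg_oneq; simp only [one_div] at this; exact this.symm⟩)
    simpa [smul_eq_mul, Pi.mul_def] using this
  intro i
  have hTint : ∀ j k, Integrable (fun ω => v ω j * v ω k * (v ω i) ^ 2) μ := fun j k =>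
    (hInt4 j k i i).congr (Filter.Eventually.of_forall fun ω => by ring)
  -- value of each cross term
  have hT : ∀ j k, ∫ ω, v ω j * v ω k * (v ω i) ^ 2 ∂μ
      = if j = k then (if j = i then m₄ else 1) else 0 := by
    intro j k
    by_cases hjk : j = k
    · subst hjk
      rw [if_pos rfl]
      by_cases hji : j = i
      · subst hji
        rw [if_pos rfl]
        rw [show (∫ ω, v ω j * v ω j * (v ω j) ^ 2 ∂μ) = ∫ ω, (v ω j) ^ 4 ∂μ from
          integral_congr_ae (Filter.Eventually.of_forall fun ω => by ring)]
        exact hfourth j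
      · rw [if_neg hji]
        have hInd : IndepFun (fun ω => (v ω j) ^ 2) (fun ω => (v ω i) ^ 2) μ :=
          (hindep.indepFun hji).comp (measurable_id.pow_const 2) (measurable_id.pow_const 2)
        have h := hInd.integral_fun_mul_eq_mul_integral ((hmeas j).pow_const 2).aestronglyMeasurable
          ((hmeas i).pow_const 2).aestronglyMeasurable
        rw [show (∫ ω, v ω j * v ω j * (v ω i) ^ 2 ∂μ) = ∫ ω, (v ω j) ^ 2 * (v ω i) ^ 2 ∂μ from
          integral_congr_ae (Filter.Eventually.of_forall fun ω => by ring), h, hvar j, hvar i]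
        norm_num
    · rw [if_neg hjk]
      by_cases hji : j = i
      · subst hji
        have hInd : IndepFun (fun ω => (v ω j) ^ 3) (fun ω => v ω k) μ :=
          (hindep.indepFun hjk).comp (measurable_id.pow_const 3) measurable_id
        have h := hInd.integral_fun_mul_eq_mul_integral ((hmeas j).pow_const 3).aestronglyMeasurable (hAES k)
        rw [show (∫ ω, v ω j * v ω k * (v ω j) ^ 2 ∂μ) = ∫ ω, (v ω j) ^ 3 * v ω k ∂μ from
          integral_congr_ae (Filter.Eventually.of_forall fun ω => by ring), h, hthird j]
        ring
      · by_cases hki : k = i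
        · subst hki
          have hInd : IndepFun (fun ω => (v ω k) ^ 3) (fun ω => v ω j) μ :=
            (hindep.indepFun (Ne.symm hjk)).comp (measurable_id.pow_const 3) measurable_id
          have h := hInd.integral_fun_mul_eq_mul_integral ((hmeas k).pow_const 3).aestronglyMeasurable (hAES j)
          rw [show (∫ ω, v ω j * v ω k * (v ω k) ^ 2 ∂μ) = ∫ ω, (v ω k) ^ 3 * v ω j ∂μ from
            integral_congr_ae (Filter.Eventually.of_forall fun ω => by ring), h, hthird k]
          ring
        · have hInd : IndepFun (fun ω => v ω k * (v ω i) ^ 2) (fun ω => v ω j) μ := by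
            have h2 := hindep.indepFun_prodMk hmeas k i j (Ne.symm hjk) (Ne.symm hji)
            exact h2.comp (show Measurable fun p : ℝ × ℝ => p.1 * p.2 ^ 2 by fun_prop)
              measurable_id
          have h := hInd.integral_fun_mul_eq_mul_integral
            (((hmeas k).mul ((hmeas i).pow_const 2)).aestronglyMeasurable) (hAES j)
          rw [show (∫ ω, v ω j * v ω k * (v ω i) ^ 2 ∂μ)
              = ∫ ω, v ω k * (v ω i) ^ 2 * v ω j ∂μ from
            integral_congr_ae (Filter.Eventually.of_forall fun ω => by ring), h, hmean j]
          ring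
  -- expansion of the second moment
  have hexp : ∫ ω, ((∑ j, a j * v ω j) * v ω i) ^ 2 ∂μ
      = m₄ * (a i) ^ 2 + ∑ j ∈ Finset.univ.erase i, (a j) ^ 2 := by
    have hpt : ∀ ω, ((∑ j, a j * v ω j) * v ω i) ^ 2
        = ∑ j, ∑ k, a j * a k * (v ω j * v ω k * (v ω i) ^ 2) := by
      intro ω
      rw [mul_pow, sq, Finset.sum_mul_sum, Finset.sum_mul]
      refine Finset.sum_congr rfl fun j _ => ?_
      rw [Finset.sum_mul]
      exact Finset.sum_congr rfl fun k _ => by ring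
    rw [integral_congr_ae (Filter.Eventually.of_forall hpt)]
    rw [integral_finset_sum _ (fun j _ =>
      integrable_finset_sum _ (fun k _ => (hTint j k).const_mul _))]
    have : ∀ j : Fin n, ∫ ω, (∑ k, a j * a k * (v ω j * v ω k * (v ω i) ^ 2)) ∂μ
        = (a j) ^ 2 * (if j = i then m₄ else 1) := by
      intro j
      rw [integral_finset_sum _ (fun k _ => (hTint j k).const_mul _)]
      have : ∀ k : Fin n, ∫ ω, a j * a k * (v ω j * v ω k * (v ω i) ^ 2) ∂μ
          = a j * a k * (if j = k then (if j = i then m₄ else 1) else 0) := by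
        intro k
        rw [integral_const_mul, hT j k]
      rw [Finset.sum_congr rfl fun k _ => this k]
      rw [Finset.sum_eq_single j]
      · rw [if_pos rfl]; ring
      · intro k _ hkj
        rw [if_neg (fun h => hkj h.symm), mul_zero]
      · intro h; exact absurd (Finset.mem_univ j) h
    rw [Finset.sum_congr rfl fun j _ => this j]
    rw [← Finset.add_sum_erase _ _ (Finset.mem_univ i), if_pos rfl]
    rw [Finset.sum_congr rfl fun j hj => by
      rw [if_neg (Finset.ne_of_mem_erase hj)]]
    simp [mul_comm]
  refine ⟨hexp, ?_⟩
  -- the mean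
  have hEg : ∫ ω, (∑ j, a j * v ω j) * v ω i ∂μ = a i := by
    have hpt : ∀ ω, (∑ j, a j * v ω j) * v ω i = ∑ j, a j * (v ω j * v ω i) := by
      intro ω
      rw [Finset.sum_mul]
      exact Finset.sum_congr rfl fun j _ => by ring
    rw [integral_congr_ae (Filter.Eventually.of_forall hpt)]
    rw [integral_finset_sum _ (fun j _ =>
      ((hL2 j i).integrable (by norm_num)).const_mul _)]
    have : ∀ j : Fin n, ∫ ω, a j * (v ω j * v ω i) ∂μ = a j * (if j = i then 1 else 0) := by
      intro j
      rw [integral_const_mul]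
      congr 1
      by_cases hji : j = i
      · subst hji
        rw [if_pos rfl, show (∫ ω, v ω j * v ω j ∂μ) = ∫ ω, (v ω j) ^ 2 ∂μ from
          integral_congr_ae (Filter.Eventually.of_forall fun ω => by ring)]
        exact hvar j
      · rw [if_neg hji]
        have h := (hindep.indepFun hji).integral_fun_mul_eq_mul_integral (hAES j) (hAES i)
        rw [h, hmean j, zero_mul]
    rw [Finset.sum_congr rfl fun j _ => this j, Finset.sum_eq_single i]
    · rw [if_pos rfl, mul_one]
    · intro k _ hki; rw [if_neg hki, mul_zero]
    · intro h; exact absurd (Finset.mem_univ i) h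
  -- membership in L2
  have hgL4 : MemLp (fun ω => ∑ j, a j * v ω j) 4 μ := by
    have := memLp_finset_sum' Finset.univ
      (f := fun j ω => a j * v ω j) (fun j _ => (hL4 j).const_mul (a j))
    convert this using 1
    ext ω
    simp
  have hgL2 : MemLp (fun ω => (∑ j, a j * v ω j) * v ω i) 2 μ := by
    have := (hL4 i).smul hgL4 (hpqr := ⟨by have := fg_halfq; simp only [one_div] at this; exact this.symm⟩)
    simpa [smul_eq_mul, Pi.mul_def] using this
  rw [variance_eq_sub hgL2]
  have hsq : (μ[(fun ω => (∑ j, a j * v ω j) * v ω i) ^ 2] : ℝ)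
      = ∫ ω, ((∑ j, a j * v ω j) * v ω i) ^ 2 ∂μ := by
    apply integral_congr_ae
    filter_upwards with ω
    simp [Pi.pow_apply]
  rw [hsq, hexp, hEg]
  ring
end

section
/- For v ~ N(0, I_n) and a ∈ ℝⁿ, the expected squared norm of the forward gradient g = (a·v)v satisfies E[‖g‖²] = (n + 2)‖a‖². -/
open MeasureTheory ProbabilityTheory

namespace GaussFG

open Real Filter Set

noncomputable def G : Measure ℝ := gaussianReal 0 1

instance : IsProbabilityMeasure G := by
  unfold G; infer_instance

lemma pdf_eq (x : ℝ) :
    gaussianPDFReal 0 1 x = (Real.sqrt (2 * π))⁻¹ * Real.exp (-x ^ 2 / 2) := by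
  simp [gaussianPDFReal]

lemma integrable_pow_exp (k : ℕ) :
    Integrable (fun x : ℝ => x ^ k * Real.exp (-x ^ 2 / 2)) := by
  have hmeas : AEStronglyMeasurable (fun x : ℝ => x ^ k * Real.exp (-x ^ 2 / 2)) volume := by
    apply Measurable.aestronglyMeasurable
    exact (measurable_id.pow_const k).mul
      ((((measurable_id.pow_const 2).neg).div_const 2).exp)
  refine Integrable.mono'
    (((integrable_exp_neg_mul_sq (by norm_num : (0:ℝ) < 1/4)).const_mul
      ((k.factorial : ℝ) * Real.exp 1))) hmeas (Filter.Eventually.of_forall fun x => ?_)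
  have h1 : |x| ^ k ≤ (k.factorial : ℝ) * Real.exp |x| := by
    have hsum := Real.sum_le_exp_of_nonneg (abs_nonneg x) (k + 1)
    have hterm : |x| ^ k / (k.factorial : ℝ) ≤ Real.exp |x| := by
      refine le_trans ?_ hsum
      exact Finset.single_le_sum (f := fun i => |x| ^ i / (i.factorial : ℝ))
        (fun i _ => by positivity) (Finset.self_mem_range_succ k)
    have hk : (0:ℝ) < (k.factorial : ℝ) := by positivity
    calc |x| ^ k = (|x| ^ k / (k.factorial : ℝ)) * (k.factorial : ℝ) := by field_simp
    _ ≤ Real.exp |x| * (k.factorial : ℝ) := by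
        exact mul_le_mul_of_nonneg_right hterm hk.le
    _ = (k.factorial : ℝ) * Real.exp |x| := by ring
  have h2 : Real.exp |x| ≤ Real.exp (x ^ 2 / 4 + 1) := by
    apply Real.exp_le_exp.2
    nlinarith [sq_abs x, sq_nonneg (|x| / 2 - 1)]
  have hxk : ‖x ^ k * Real.exp (-x ^ 2 / 2)‖ = |x| ^ k * Real.exp (-x ^ 2 / 2) := by
    rw [norm_mul, norm_pow, Real.norm_eq_abs, Real.norm_eq_abs,
      abs_of_nonneg (Real.exp_nonneg _)]
  rw [hxk]
  calc |x| ^ k * Real.exp (-x ^ 2 / 2)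
      ≤ ((k.factorial : ℝ) * Real.exp (x ^ 2 / 4 + 1)) * Real.exp (-x ^ 2 / 2) := by
        refine mul_le_mul_of_nonneg_right ?_ (Real.exp_nonneg _)
        exact h1.trans (mul_le_mul_of_nonneg_left h2 (by positivity))
    _ = (k.factorial : ℝ) * Real.exp 1 * Real.exp (-(1/4) * x ^ 2) := by
        rw [mul_assoc, ← Real.exp_add, mul_assoc, ← Real.exp_add]
        ring_nf

lemma tendsto_top (m : ℕ) :
    Tendsto (fun x : ℝ => x ^ m * Real.exp (-x ^ 2 / 2)) atTop (nhds 0) := by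
  have hhalf : Tendsto (fun x : ℝ => Real.exp (-(1/2) * x)) atTop (nhds 0) := by
    have h1 : Tendsto (fun x : ℝ => -((1/2) * x)) atTop atBot :=
      tendsto_neg_atTop_atBot.comp (Filter.Tendsto.const_mul_atTop (by norm_num) tendsto_id)
    have := Real.tendsto_exp_atBot.comp h1
    refine this.congr fun x => ?_
    simp [Function.comp, neg_mul]
  have h := (rpow_mul_exp_neg_mul_sq_isLittleO_exp_neg (by norm_num : (0:ℝ) < 1/2)
    (m : ℝ)).trans_tendsto hhalf
  refine h.congr fun x => ?_
  rw [Real.rpow_natCast]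
  ring_nf

lemma tendsto_bot (m : ℕ) :
    Tendsto (fun x : ℝ => x ^ m * Real.exp (-x ^ 2 / 2)) atBot (nhds 0) := by
  have h := ((tendsto_top m).comp tendsto_neg_atBot_atTop).const_mul ((-1 : ℝ) ^ m)
  rw [mul_zero] at h
  refine h.congr fun x => ?_
  simp only [Function.comp]
  rw [← mul_assoc, ← mul_pow]
  ring_nf

lemma integral_eq_zero_of_antideriv (F f : ℝ → ℝ) (hF : ∀ x, HasDerivAt F (f x) x)
    (hf : Integrable f) (hbot : Tendsto F atBot (nhds 0)) (htop : Tendsto F atTop (nhds 0)) :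
    ∫ x, f x = 0 := by
  rw [← intervalIntegral.integral_Iic_add_Ioi (b := 0) hf.integrableOn hf.integrableOn,
    integral_Iic_of_hasDerivAt_of_tendsto' (fun x _ => hF x) hf.integrableOn hbot,
    integral_Ioi_of_hasDerivAt_of_tendsto' (fun x _ => hF x) hf.integrableOn htop]
  ring

lemma hasDerivAt_exp_neg_sq (x : ℝ) :
    HasDerivAt (fun x : ℝ => Real.exp (-x ^ 2 / 2)) (Real.exp (-x ^ 2 / 2) * (-x)) x := by
  have h1 : HasDerivAt (fun x : ℝ => -x ^ 2 / 2) (-x) x := by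
    have := (hasDerivAt_pow 2 x).neg.div_const 2
    exact this.congr_deriv (by norm_num; ring)
  exact h1.exp

lemma L0 : ∫ x : ℝ, Real.exp (-x ^ 2 / 2) = Real.sqrt (2 * π) := by
  have h := integral_gaussian (1/2)
  simp only [show ∀ x : ℝ, -(1/2 : ℝ) * x ^ 2 = -x ^ 2 / 2 from fun x => by ring] at h
  rw [h]
  congr 1
  ring

lemma L1 : ∫ x : ℝ, x * Real.exp (-x ^ 2 / 2) = 0 := by
  refine integral_eq_zero_of_antideriv (fun x => -Real.exp (-x ^ 2 / 2)) _
    (fun x => ?_) (by simpa using integrable_pow_exp 1) ?_ ?_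
  · have := (hasDerivAt_exp_neg_sq x).neg
    exact this.congr_deriv (by (try simp only [id_eq]); ring1)
  · simpa using (tendsto_bot 0).neg
  · simpa using (tendsto_top 0).neg

lemma hE0 : Integrable (fun x : ℝ => Real.exp (-x ^ 2 / 2)) := by
  simpa using integrable_pow_exp 0

lemma hE3 : Integrable (fun x : ℝ => 3 * Real.exp (-x ^ 2 / 2)) := by
  simpa using (hE0).const_mul 3

lemma L2 : ∫ x : ℝ, x ^ 2 * Real.exp (-x ^ 2 / 2) = Real.sqrt (2 * π) := by
  have key : ∫ x : ℝ, (x ^ 2 * Real.exp (-x ^ 2 / 2) - Real.exp (-x ^ 2 / 2)) = 0 := by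
    refine integral_eq_zero_of_antideriv (fun x => -(x * Real.exp (-x ^ 2 / 2))) _
      (fun x => ?_) ((integrable_pow_exp 2).sub hE0) ?_ ?_
    · have := ((hasDerivAt_id x).mul (hasDerivAt_exp_neg_sq x)).neg
      exact this.congr_deriv (by (try simp only [id_eq]); ring1)
    · simpa using (tendsto_bot 1).neg
    · simpa using (tendsto_top 1).neg
  have := integral_sub (integrable_pow_exp 2) hE0
  rw [key] at this
  have h0 : ∫ x : ℝ, Real.exp (-x ^ 2 / 2) = Real.sqrt (2 * π) := L0
  linarith [this.symm, h0]

lemma L3 : ∫ x : ℝ, x ^ 3 * Real.exp (-x ^ 2 / 2) = 0 := by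
  refine integral_eq_zero_of_antideriv
    (fun x => -((x ^ 2 + 2) * Real.exp (-x ^ 2 / 2))) _
    (fun x => ?_) (integrable_pow_exp 3) ?_ ?_
  · have := (((hasDerivAt_pow 2 x).add_const 2).mul (hasDerivAt_exp_neg_sq x)).neg
    exact this.congr_deriv (by (try simp only [id_eq]); ring1)
  · have := ((tendsto_bot 2).add ((tendsto_bot 0).const_mul 2)).neg
    simp only [pow_zero, one_mul, add_zero, neg_zero, mul_zero] at this ⊢
    refine this.congr fun x => ?_; ring
  · have := ((tendsto_top 2).add ((tendsto_top 0).const_mul 2)).neg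
    simp only [pow_zero, one_mul, add_zero, neg_zero, mul_zero] at this ⊢
    refine this.congr fun x => ?_; ring

lemma L4 : ∫ x : ℝ, x ^ 4 * Real.exp (-x ^ 2 / 2) = 3 * Real.sqrt (2 * π) := by
  have key : ∫ x : ℝ, (x ^ 4 * Real.exp (-x ^ 2 / 2) - 3 * Real.exp (-x ^ 2 / 2)) = 0 := by
    refine integral_eq_zero_of_antideriv
      (fun x => -((x ^ 3 + 3 * x) * Real.exp (-x ^ 2 / 2))) _
      (fun x => ?_) ((integrable_pow_exp 4).sub hE3) ?_ ?_
    · have := (((hasDerivAt_pow 3 x).add ((hasDerivAt_id x).const_mul 3)).mul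
        (hasDerivAt_exp_neg_sq x)).neg
      exact this.congr_deriv (by (try simp only [id_eq, Pi.add_apply]); ring1)
    · have := ((tendsto_bot 3).add ((tendsto_bot 1).const_mul 3)).neg
      simp only [add_zero, neg_zero, mul_zero] at this ⊢
      refine this.congr fun x => ?_; ring
    · have := ((tendsto_top 3).add ((tendsto_top 1).const_mul 3)).neg
      simp only [add_zero, neg_zero, mul_zero] at this ⊢
      refine this.congr fun x => ?_; ring
  have := integral_sub (integrable_pow_exp 4) hE3
  rw [key] at this
  have h3 : ∫ x : ℝ, 3 * Real.exp (-x ^ 2 / 2) = 3 * Real.sqrt (2 * π) := by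
    rw [integral_const_mul, L0]
  linarith [this.symm, h3]

open scoped ENNReal NNReal

lemma pdf_fun_eq :
    gaussianPDF 0 1 = fun x => (((gaussianPDFReal 0 1 x).toNNReal : ℝ≥0) : ℝ≥0∞) := rfl

lemma integral_G (f : ℝ → ℝ) :
    ∫ x, f x ∂(gaussianReal 0 1) = ∫ x, gaussianPDFReal 0 1 x * f x := by
  rw [gaussianReal_of_var_ne_zero 0 one_ne_zero, pdf_fun_eq,
    integral_withDensity_eq_integral_smul₀
      ((measurable_gaussianPDFReal 0 1).real_toNNReal.aemeasurable) f]
  congr 1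
  funext x
  simp [NNReal.smul_def, Real.coe_toNNReal _ (gaussianPDFReal_nonneg 0 1 x)]

lemma integrable_G_iff (f : ℝ → ℝ) :
    Integrable f (gaussianReal 0 1) ↔ Integrable (fun x => gaussianPDFReal 0 1 x * f x) := by
  rw [gaussianReal_of_var_ne_zero 0 one_ne_zero, pdf_fun_eq,
    integrable_withDensity_iff_integrable_smul₀
      ((measurable_gaussianPDFReal 0 1).real_toNNReal.aemeasurable)]
  have hfun : (fun x => ((gaussianPDFReal 0 1 x).toNNReal : ℝ≥0) • f x)
      = fun x => gaussianPDFReal 0 1 x * f x := by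
    funext x
    simp [NNReal.smul_def, Real.coe_toNNReal _ (gaussianPDFReal_nonneg 0 1 x)]
  rw [hfun]

noncomputable def M (k : ℕ) : ℝ := ∫ x, x ^ k ∂(gaussianReal 0 1)

lemma pdf_mul_pow (k : ℕ) : (fun x : ℝ => gaussianPDFReal 0 1 x * x ^ k)
    = fun x => (Real.sqrt (2 * π))⁻¹ * (x ^ k * Real.exp (-x ^ 2 / 2)) := by
  funext x; rw [pdf_eq]; ring

lemma integrable_pow_G (k : ℕ) : Integrable (fun x : ℝ => x ^ k) (gaussianReal 0 1) := by
  rw [integrable_G_iff, pdf_mul_pow]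
  exact (integrable_pow_exp k).const_mul _

lemma M_eq (k : ℕ) :
    M k = (Real.sqrt (2 * π))⁻¹ * ∫ x, x ^ k * Real.exp (-x ^ 2 / 2) := by
  rw [M, integral_G, pdf_mul_pow, integral_const_mul]

lemma sqrt_two_pi_ne : Real.sqrt (2 * π) ≠ 0 := by
  have := Real.pi_pos
  positivity

lemma M0 : M 0 = 1 := by
  rw [M_eq]
  simp only [pow_zero, one_mul, L0]
  exact inv_mul_cancel₀ sqrt_two_pi_ne

lemma M1 : M 1 = 0 := by
  rw [M_eq]
  simp only [pow_one, L1, mul_zero]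

lemma M2 : M 2 = 1 := by
  rw [M_eq, L2]
  exact inv_mul_cancel₀ sqrt_two_pi_ne

lemma M3 : M 3 = 0 := by
  rw [M_eq, L3, mul_zero]

lemma M4 : M 4 = 3 := by
  rw [M_eq, L4]
  field_simp

/-! ### Product measure -/

def Rg : Type := ℝ

instance : MeasurableSpace Rg := inferInstanceAs (MeasurableSpace ℝ)

noncomputable instance : MeasureSpace Rg := { volume := gaussianReal 0 1 }

instance : IsProbabilityMeasure (volume : Measure Rg) :=
  inferInstanceAs (IsProbabilityMeasure (gaussianReal 0 1))

lemma integral_pi_prod {n : ℕ} (f : Fin n → ℝ → ℝ) :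
    ∫ x : Fin n → ℝ, ∏ i, f i (x i) ∂(Measure.pi fun _ => gaussianReal 0 1)
      = ∏ i, ∫ t, f i t ∂(gaussianReal 0 1) := by
  have h := MeasureTheory.integral_fintype_prod_eq_prod (𝕜 := ℝ) (ι := Fin n)
    (E := fun _ => ℝ) (μ := fun _ => gaussianReal 0 1) (f := fun i (t : ℝ) => f i t)
  exact h

lemma integrable_pi_prod {n : ℕ} (f : Fin n → ℝ → ℝ)
    (hf : ∀ i, Integrable (f i) (gaussianReal 0 1)) :
    Integrable (fun x : Fin n → ℝ => ∏ i, f i (x i))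
      (Measure.pi fun _ => gaussianReal 0 1) := by
  have h := MeasureTheory.Integrable.fintype_prod (𝕜 := ℝ) (ι := Fin n) (E := ℝ)
    (f := fun i (t : ℝ) => f i t) (fun i => hf i)
  exact h

def expo {n : ℕ} (i j k l : Fin n) : ℕ :=
  (if l = j then 1 else 0) + (if l = k then 1 else 0) + (if l = i then 2 else 0)

lemma prod_pow_single {n : ℕ} (x : Fin n → ℝ) (j : Fin n) (m : ℕ) :
    ∏ l, x l ^ (if l = j then m else 0) = x j ^ m := by
  have h : ∀ l ∈ Finset.univ, x l ^ (if l = j then m else 0)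
      = (if l = j then x l ^ m else 1) := by
    intro l _; split <;> simp
  rw [Finset.prod_congr rfl h, Finset.prod_ite_eq' Finset.univ j (fun l => x l ^ m)]
  simp

lemma prod_expo {n : ℕ} (x : Fin n → ℝ) (i j k : Fin n) :
    ∏ l, x l ^ expo i j k l = x j * x k * x i ^ 2 := by
  simp only [expo, pow_add, Finset.prod_mul_distrib]
  rw [prod_pow_single, prod_pow_single, prod_pow_single, pow_one, pow_one]

lemma integral_mono {n : ℕ} (e : Fin n → ℕ) :
    ∫ x : Fin n → ℝ, ∏ l, x l ^ e l ∂(Measure.pi fun _ => gaussianReal 0 1)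
      = ∏ l, M (e l) := by
  rw [integral_pi_prod (fun l t => t ^ e l)]
  rfl

lemma integrable_mono {n : ℕ} (e : Fin n → ℕ) :
    Integrable (fun x : Fin n → ℝ => ∏ l, x l ^ e l)
      (Measure.pi fun _ => gaussianReal 0 1) :=
  integrable_pi_prod _ (fun l => integrable_pow_G (e l))

lemma prod_M_expo {n : ℕ} (i j k : Fin n) :
    ∏ l, M (expo i j k l) = if j = k then (if i = j then (3:ℝ) else 1) else 0 := by
  by_cases hjk : j = k
  · subst hjk
    by_cases hij : i = j
    · subst hij
      have h : ∀ l ∈ Finset.univ, M (expo i i i l) = (if l = i then (3:ℝ) else 1) := by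
        intro l _
        by_cases h : l = i <;> simp [expo, h, M4, M0]
      rw [Finset.prod_congr rfl h, Finset.prod_ite_eq' Finset.univ i (fun _ => (3:ℝ))]
      simp
    · have h : ∀ l ∈ Finset.univ, M (expo i j j l) = 1 := by
        intro l _
        by_cases h1 : l = j
        · have hji' : ¬ j = i := fun h => hij h.symm
          simp [expo, h1, hji', M2]
        · by_cases h2 : l = i <;> simp [expo, h1, h2, hij, M2, M0]
      rw [Finset.prod_congr rfl h]
      simp [hij]
  · simp only [if_neg hjk]
    refine Finset.prod_eq_zero (Finset.mem_univ j) ?_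
    by_cases hji : j = i
    · have hik : ¬ i = k := fun h => hjk (hji.trans h)
      simp [expo, hjk, hji, hik, M3]
    · simp [expo, hjk, hji, M1]

lemma pi_main {n : ℕ} (a : Fin n → ℝ) :
    ∫ x : Fin n → ℝ, ∑ i, ((∑ j, a j * x j) * x i) ^ 2
        ∂(Measure.pi fun _ => gaussianReal 0 1)
      = ((n : ℝ) + 2) * ∑ i, a i ^ 2 := by
  have expand : ∀ x : Fin n → ℝ,
      ∑ i, ((∑ j, a j * x j) * x i) ^ 2
        = ∑ i, ∑ j, ∑ k, (a j * a k) * ∏ l, x l ^ expo i j k l := by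
    intro x
    refine Finset.sum_congr rfl fun i _ => ?_
    rw [mul_pow, pow_two (∑ j, a j * x j), Finset.sum_mul_sum, Finset.sum_mul]
    refine Finset.sum_congr rfl fun j _ => ?_
    rw [Finset.sum_mul]
    refine Finset.sum_congr rfl fun k _ => ?_
    rw [prod_expo]
    ring
  simp only [expand]
  have hint1 : ∀ (i j k : Fin n),
      Integrable (fun x : Fin n → ℝ => (a j * a k) * ∏ l, x l ^ expo i j k l)
        (Measure.pi fun _ => gaussianReal 0 1) :=
    fun i j k => (integrable_mono _).const_mul _
  rw [integral_finset_sum _ (fun i _ => integrable_finset_sum _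
    (fun j _ => integrable_finset_sum _ (fun k _ => hint1 i j k)))]
  have step : ∀ i : Fin n,
      (∫ x : Fin n → ℝ, ∑ j, ∑ k, (a j * a k) * ∏ l, x l ^ expo i j k l
          ∂(Measure.pi fun _ => gaussianReal 0 1))
        = ∑ j, ∑ k, (a j * a k)
            * (if j = k then (if i = j then (3:ℝ) else 1) else 0) := by
    intro i
    rw [integral_finset_sum _ (fun j _ => integrable_finset_sum _
      (fun k _ => hint1 i j k))]
    refine Finset.sum_congr rfl fun j _ => ?_
    rw [integral_finset_sum _ (fun k _ => hint1 i j k)]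
    refine Finset.sum_congr rfl fun k _ => ?_
    rw [integral_const_mul, integral_mono, prod_M_expo]
  rw [Finset.sum_congr rfl fun i _ => step i]
  have collapse : ∀ i : Fin n,
      ∑ j, ∑ k, (a j * a k) * (if j = k then (if i = j then (3:ℝ) else 1) else 0)
        = ∑ j, a j ^ 2 + 2 * a i ^ 2 := by
    intro i
    have h1 : ∀ j : Fin n,
        ∑ k, (a j * a k) * (if j = k then (if i = j then (3:ℝ) else 1) else 0)
          = a j ^ 2 * (if i = j then (3:ℝ) else 1) := by
      intro j
      have hterm : ∀ k : Fin n, (a j * a k) * (if j = k then (if i = j then (3:ℝ) else 1) else 0)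
          = (if j = k then (a j * a k) * (if i = j then (3:ℝ) else 1) else 0) := by
        intro k; split <;> simp
      rw [Finset.sum_congr rfl fun k _ => hterm k, Finset.sum_ite_eq]
      simp [pow_two]
    rw [Finset.sum_congr rfl fun j _ => h1 j]
    have h2 : ∀ j : Fin n, a j ^ 2 * (if i = j then (3:ℝ) else 1)
        = a j ^ 2 + (if i = j then 2 * a j ^ 2 else 0) := by
      intro j; split <;> ring
    rw [Finset.sum_congr rfl fun j _ => h2 j, Finset.sum_add_distrib, Finset.sum_ite_eq]
    simp
  rw [Finset.sum_congr rfl fun i _ => collapse i, Finset.sum_add_distrib]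
  simp only [Finset.sum_const, Finset.card_univ, Fintype.card_fin, nsmul_eq_mul]
  rw [← Finset.mul_sum]
  ring

end GaussFG

/-- For `v ~ N(0, I_n)` and `a ∈ ℝⁿ`, the expected squared norm of the forward
gradient `g = (a·v) v` satisfies `E[‖g‖²] = (n + 2) ‖a‖²`. -/
theorem gaussian_forward_gradient_norm_sq
    {Ω : Type*} [MeasurableSpace Ω] {μ : Measure Ω} [IsProbabilityMeasure μ]
    {n : ℕ} (a : Fin n → ℝ) (v : Ω → Fin n → ℝ)
    (hmeas : ∀ i, Measurable fun ω => v ω i)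
    (hindep : iIndepFun (fun i ω => v ω i) μ)
    (hlaw : ∀ i, Measure.map (fun ω => v ω i) μ = gaussianReal 0 1) :
    ∫ ω, ∑ i, ((∑ j, a j * v ω j) * v ω i) ^ 2 ∂μ
      = ((n : ℝ) + 2) * ∑ i, (a i) ^ 2 := by
  classical
  have hV : Measurable (fun ω => v ω) := measurable_pi_lambda _ hmeas
  have hmap : Measure.map (fun ω => v ω) μ
      = Measure.pi (fun _ : Fin n => gaussianReal 0 1) := by
    refine (Measure.pi_eq fun s hs => ?_).symm
    rw [Measure.map_apply hV (MeasurableSet.univ_pi hs)]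
    have hpre : (fun ω => v ω) ⁻¹' (Set.pi Set.univ s)
        = ⋂ i ∈ Finset.univ, (fun ω => v ω i) ⁻¹' (s i) := by
      ext ω; simp [Set.mem_pi]
    rw [hpre, (iIndepFun_iff_measure_inter_preimage_eq_mul.mp hindep) Finset.univ
      (fun i _ => hs i)]
    refine Finset.prod_congr rfl fun i _ => ?_
    rw [← Measure.map_apply (hmeas i) (hs i), hlaw i]
  have hF : Continuous (fun x : Fin n → ℝ => ∑ i, ((∑ j, a j * x j) * x i) ^ 2) := by
    exact continuous_finset_sum _ fun i _ =>
      ((continuous_finset_sum _ fun j _ =>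
        (continuous_const.mul (continuous_apply j))).mul (continuous_apply i)).pow 2
  calc ∫ ω, ∑ i, ((∑ j, a j * v ω j) * v ω i) ^ 2 ∂μ
      = ∫ x : Fin n → ℝ, ∑ i, ((∑ j, a j * x j) * x i) ^ 2
          ∂(Measure.map (fun ω => v ω) μ) :=
        (integral_map hV.aemeasurable hF.aestronglyMeasurable).symm
    _ = ((n : ℝ) + 2) * ∑ i, (a i) ^ 2 := by rw [hmap]; exact GaussFG.pi_main a
end

section
/- Let f(θ) = (1/2)‖θ‖² on ℝⁿ. For the forward gradient update θ' = θ − η(∇f(θ)·v)v with v ~ N(0, I_n) and step size η > 0, the expected squared norm satisfies E[‖θ'‖²] = (1 − 2η + η²(n+2))‖θ‖²; in particular, for 0 < η < 2/(n+2) the iteration contracts in expectation. -/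
open MeasureTheory ProbabilityTheory
open MeasureTheory ProbabilityTheory Real Set
open scoped NNReal ENNReal

lemma fg_pdf_eq (x : ℝ) : gaussianPDFReal 0 1 x = (√(2*π))⁻¹ * rexp (-x^2/2) := by
  simp [gaussianPDFReal]

lemma fg_integral_eq (g : ℝ → ℝ) :
    ∫ x, g x ∂(gaussianReal 0 1) = ∫ x, gaussianPDFReal 0 1 x * g x := by
  rw [gaussianReal_of_var_ne_zero 0 one_ne_zero]
  have h : gaussianPDF 0 1 = fun x => ((Real.toNNReal (gaussianPDFReal 0 1 x) : ℝ≥0) : ENNReal) := by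
    ext x; simp [gaussianPDF, ENNReal.ofReal]
  rw [h, integral_withDensity_eq_integral_smul
    ((measurable_gaussianPDFReal 0 1).real_toNNReal)]
  congr 1; ext x
  simp [NNReal.smul_def, Real.coe_toNNReal _ (gaussianPDFReal_nonneg 0 1 x)]

lemma fg_integrable_iff (g : ℝ → ℝ) :
    Integrable g (gaussianReal 0 1) ↔
      Integrable (fun x => g x * gaussianPDFReal 0 1 x) := by
  rw [gaussianReal_of_var_ne_zero 0 one_ne_zero]
  rw [integrable_withDensity_iff (measurable_gaussianPDF 0 1)
    (ae_of_all _ fun x => ENNReal.ofReal_lt_top)]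
  refine integrable_congr (ae_of_all _ fun x => ?_)
  simp [gaussianPDF, ENNReal.toReal_ofReal (gaussianPDFReal_nonneg 0 1 x)]

lemma fg_integrable_pow (k : ℕ) : Integrable (fun x => x^k) (gaussianReal 0 1) := by
  rw [fg_integrable_iff]
  have h : (fun x : ℝ => x ^ k * gaussianPDFReal 0 1 x)
      = fun x => (√(2*π))⁻¹ * (x ^ ((k:ℝ)) * rexp (-(1/2) * x^2)) := by
    ext x
    rw [fg_pdf_eq, Real.rpow_natCast]
    ring_nf
  rw [h]
  exact (integrable_rpow_mul_exp_neg_mul_sq (by norm_num)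
    (lt_of_lt_of_le (by norm_num) (Nat.cast_nonneg k))).const_mul _

lemma fg_moment_odd (k : ℕ) (hk : Odd k) : ∫ x, x^k ∂(gaussianReal 0 1) = 0 := by
  rw [fg_integral_eq]
  set h : ℝ → ℝ := fun x => gaussianPDFReal 0 1 x * x^k with hh
  have h1 : ∫ x, h x = ∫ x, h (-x) := by
    conv_lhs => rw [← Measure.map_neg_eq_self (volume : Measure ℝ)]
    exact MeasureTheory.integral_map_equiv (Homeomorph.neg ℝ).toMeasurableEquiv h
  have h2 : ∀ x, h (-x) = - h x := by
    intro x
    simp only [hh, fg_pdf_eq, neg_sq, hk.neg_pow]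
    ring
  simp only [h2, integral_neg] at h1
  linarith

lemma fg_integral_Ioi (k : ℕ) :
    ∫ x in Ioi (0:ℝ), x ^ k * rexp (-(1/2) * x^2)
      = ((1:ℝ)/2) ^ (-((k:ℝ)+1)/2) * (1/2) * Real.Gamma (((k:ℝ)+1)/2) := by
  have := integral_rpow_mul_exp_neg_mul_rpow (p := 2) (q := (k:ℝ)) (b := 1/2)
    (by norm_num) (lt_of_lt_of_le (by norm_num) (Nat.cast_nonneg k)) (by norm_num)
  rw [← this]
  refine setIntegral_congr_fun measurableSet_Ioi (fun x hx => ?_)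
  rw [← Real.rpow_natCast x k, ← Real.rpow_natCast x 2]
  norm_num

lemma fg_moment_even (k : ℕ) (hk : Even k) :
    ∫ x, x^k ∂(gaussianReal 0 1)
      = (√(2*π))⁻¹ * (2 * (((1:ℝ)/2) ^ (-((k:ℝ)+1)/2) * (1/2)
          * Real.Gamma (((k:ℝ)+1)/2))) := by
  rw [fg_integral_eq]
  have h1 : (fun x : ℝ => gaussianPDFReal 0 1 x * x ^ k)
      = fun x => (√(2*π))⁻¹ * (|x| ^ k * rexp (-(1/2) * |x|^2)) := by
    ext x
    rw [fg_pdf_eq, hk.pow_abs, sq_abs]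
    ring_nf
  rw [h1]
  simp only [integral_const_mul]
  congr 1
  rw [integral_comp_abs (f := fun x => x ^ k * rexp (-(1/2) * x^2)), fg_integral_Ioi]

lemma fg_gamma32 : Real.Gamma (3/2) = √π/2 := by
  rw [show (3:ℝ)/2 = 1/2 + 1 by norm_num, Real.Gamma_add_one (by norm_num),
    Real.Gamma_one_half_eq]
  ring

lemma fg_gamma52 : Real.Gamma (5/2) = 3/4 * √π := by
  rw [show (5:ℝ)/2 = 3/2 + 1 by norm_num, Real.Gamma_add_one (by norm_num), fg_gamma32]
  ring

lemma fg_rpow (y : ℝ) : ((1:ℝ)/2) ^ (-y) = (2:ℝ) ^ y := by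
  rw [one_div, Real.inv_rpow (by norm_num), Real.rpow_neg (by norm_num), inv_inv]

lemma fg_rpow32 : ((1:ℝ)/2) ^ (-((3:ℝ)/2)) = 2 * √2 := by
  rw [show (-((3:ℝ)/2)) = -(3/2) by norm_num, fg_rpow,
    show (3:ℝ)/2 = 1 + 1/2 by norm_num, Real.rpow_add (by norm_num), Real.rpow_one,
    ← Real.sqrt_eq_rpow]

lemma fg_rpow52 : ((1:ℝ)/2) ^ (-((5:ℝ)/2)) = 4 * √2 := by
  rw [show (-((5:ℝ)/2)) = -(5/2) by norm_num, fg_rpow,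
    show (5:ℝ)/2 = 2 + 1/2 by norm_num, Real.rpow_add (by norm_num), ← Real.sqrt_eq_rpow]
  rw [show (2:ℝ) ^ (2:ℝ) = 4 by
    rw [show (2:ℝ) = ((2:ℕ):ℝ) by norm_num, Real.rpow_natCast]; norm_num]

lemma fg_sqrt2pi_pos : (0:ℝ) < √(2*π) := Real.sqrt_pos.mpr (by positivity)

lemma fg_moment_two : ∫ x, x^2 ∂(gaussianReal 0 1) = 1 := by
  rw [fg_moment_even 2 (by norm_num)]
  rw [show (-(((2:ℕ):ℝ)+1)/2) = -((3:ℝ)/2) by norm_num, fg_rpow32,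
    show ((((2:ℕ):ℝ))+1)/2 = (3:ℝ)/2 by norm_num, fg_gamma32]
  rw [show (√(2*π))⁻¹ * (2 * (2 * √2 * (1/2) * (√π/2))) = (√(2*π))⁻¹ * (√2 * √π) by ring,
    ← Real.sqrt_mul (by norm_num)]
  exact inv_mul_cancel₀ (ne_of_gt fg_sqrt2pi_pos)

lemma fg_moment_four : ∫ x, x^4 ∂(gaussianReal 0 1) = 3 := by
  rw [fg_moment_even 4 ⟨2, rfl⟩]
  rw [show (-(((4:ℕ):ℝ)+1)/2) = -((5:ℝ)/2) by norm_num, fg_rpow52,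
    show ((((4:ℕ):ℝ))+1)/2 = (5:ℝ)/2 by norm_num, fg_gamma52]
  rw [show (√(2*π))⁻¹ * (2 * (4 * √2 * (1/2) * (3/4*√π))) = 3 * ((√(2*π))⁻¹ * (√2 * √π)) by ring,
    ← Real.sqrt_mul (by norm_num), inv_mul_cancel₀ (ne_of_gt fg_sqrt2pi_pos), mul_one]

section OmegaSide

variable {Ω : Type*} [MeasurableSpace Ω] {μ : Measure Ω} [IsProbabilityMeasure μ]
  {n : ℕ} {v : Ω → Fin n → ℝ}

lemma fg_Emom (hmeas : ∀ i, Measurable fun ω => v ω i)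
    (hlaw : ∀ i, Measure.map (fun ω => v ω i) μ = gaussianReal 0 1) (k : ℕ) (i : Fin n) :
    ∫ ω, (v ω i)^k ∂μ = ∫ x, x^k ∂(gaussianReal 0 1) := by
  have := integral_map (μ := μ) (φ := fun ω => v ω i) (hmeas i).aemeasurable
    (f := fun x : ℝ => x^k) ((measurable_id.pow_const k).aestronglyMeasurable)
  rw [hlaw i] at this
  exact this.symm

lemma fg_Iint (hmeas : ∀ i, Measurable fun ω => v ω i)
    (hlaw : ∀ i, Measure.map (fun ω => v ω i) μ = gaussianReal 0 1) (k : ℕ) (i : Fin n) :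
    Integrable (fun ω => (v ω i)^k) μ := by
  have := (integrable_map_measure (μ := μ) (f := fun ω => v ω i) (g := fun x : ℝ => x^k)
    ((measurable_id.pow_const k).aestronglyMeasurable) (hmeas i).aemeasurable).mp
  rw [hlaw i] at this
  exact this (fg_integrable_pow k)

lemma fg_pair_indep (hmeas : ∀ i, Measurable fun ω => v ω i)
    (hindep : iIndepFun (m := fun _ => Real.measurableSpace) (fun i ω => v ω i) μ)
    {i j : Fin n} (hij : i ≠ j) (a b : ℕ) :
    IndepFun (fun ω => (v ω i)^a) (fun ω => (v ω j)^b) μ :=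
  (hindep.indepFun hij).comp (measurable_id.pow_const a) (measurable_id.pow_const b)

lemma fg_pair_intble (hmeas : ∀ i, Measurable fun ω => v ω i)
    (hindep : iIndepFun (m := fun _ => Real.measurableSpace) (fun i ω => v ω i) μ)
    (hlaw : ∀ i, Measure.map (fun ω => v ω i) μ = gaussianReal 0 1)
    {i j : Fin n} (hij : i ≠ j) (a b : ℕ) :
    Integrable (fun ω => (v ω i)^a * (v ω j)^b) μ :=
  (fg_pair_indep hmeas hindep hij a b).integrable_mul
    (fg_Iint hmeas hlaw a i) (fg_Iint hmeas hlaw b j)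

lemma fg_pair_int (hmeas : ∀ i, Measurable fun ω => v ω i)
    (hindep : iIndepFun (m := fun _ => Real.measurableSpace) (fun i ω => v ω i) μ)
    (hlaw : ∀ i, Measure.map (fun ω => v ω i) μ = gaussianReal 0 1)
    {i j : Fin n} (hij : i ≠ j) (a b : ℕ) :
    ∫ ω, (v ω i)^a * (v ω j)^b ∂μ
      = (∫ x, x^a ∂(gaussianReal 0 1)) * (∫ x, x^b ∂(gaussianReal 0 1)) := by
  rw [(fg_pair_indep hmeas hindep hij a b).integral_fun_mul_eq_mul_integral
    ((hmeas i).pow_const a).aestronglyMeasurable ((hmeas j).pow_const b).aestronglyMeasurable,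
    fg_Emom hmeas hlaw a i, fg_Emom hmeas hlaw b j]

lemma fg_triple_indep (hmeas : ∀ i, Measurable fun ω => v ω i)
    (hindep : iIndepFun (m := fun _ => Real.measurableSpace) (fun i ω => v ω i) μ)
    {i j k : Fin n} (hji : j ≠ i) (hki : k ≠ i) :
    IndepFun (fun ω => v ω j * v ω k) (fun ω => (v ω i)^2) μ :=
  (hindep.indepFun_prodMk hmeas j k i hji hki).comp
    (measurable_fst.mul measurable_snd) (measurable_id.pow_const 2)

lemma fg_hint2 (hmeas : ∀ i, Measurable fun ω => v ω i)
    (hindep : iIndepFun (m := fun _ => Real.measurableSpace) (fun i ω => v ω i) μ)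
    (hlaw : ∀ i, Measure.map (fun ω => v ω i) μ = gaussianReal 0 1) (i j : Fin n) :
    Integrable (fun ω => v ω i * v ω j) μ := by
  rcases eq_or_ne i j with rfl | hij
  · have := fg_Iint hmeas hlaw 2 i
    refine this.congr ?_
    exact ae_of_all _ fun ω => by ring
  · have := fg_pair_intble hmeas hindep hlaw hij 1 1
    refine this.congr ?_
    exact ae_of_all _ fun ω => by ring

lemma fg_hE2 (hmeas : ∀ i, Measurable fun ω => v ω i)
    (hindep : iIndepFun (m := fun _ => Real.measurableSpace) (fun i ω => v ω i) μ)
    (hlaw : ∀ i, Measure.map (fun ω => v ω i) μ = gaussianReal 0 1) (i j : Fin n) :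
    ∫ ω, v ω i * v ω j ∂μ = if i = j then 1 else 0 := by
  rcases eq_or_ne i j with rfl | hij
  · simp only [if_pos rfl]
    have h : (fun ω => v ω i * v ω i) = fun ω => (v ω i)^2 := by ext ω; ring
    rw [h, fg_Emom hmeas hlaw 2 i, fg_moment_two]
    norm_num
  · simp only [if_neg hij]
    have h : (fun ω => v ω i * v ω j) = fun ω => (v ω i)^1 * (v ω j)^1 := by ext ω; ring
    rw [h, fg_pair_int hmeas hindep hlaw hij 1 1, fg_moment_odd 1 odd_one, zero_mul]

lemma fg_hint4 (hmeas : ∀ i, Measurable fun ω => v ω i)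
    (hindep : iIndepFun (m := fun _ => Real.measurableSpace) (fun i ω => v ω i) μ)
    (hlaw : ∀ i, Measure.map (fun ω => v ω i) μ = gaussianReal 0 1) (i j k : Fin n) :
    Integrable (fun ω => v ω j * v ω k * (v ω i)^2) μ := by
  rcases eq_or_ne j k with rfl | hjk
  · rcases eq_or_ne j i with rfl | hji
    · exact (fg_Iint hmeas hlaw 4 j).congr (ae_of_all _ fun ω => by ring)
    · exact (fg_pair_intble hmeas hindep hlaw hji 2 2).congr (ae_of_all _ fun ω => by ring)
  · rcases eq_or_ne i j with rfl | hij
    · exact (fg_pair_intble hmeas hindep hlaw hjk 3 1).congr (ae_of_all _ fun ω => by ring)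
    · rcases eq_or_ne i k with rfl | hik
      · exact (fg_pair_intble hmeas hindep hlaw hjk 1 3).congr (ae_of_all _ fun ω => by ring)
      · exact ((fg_triple_indep hmeas hindep (Ne.symm hij) (Ne.symm hik)).integrable_mul
          ((fg_pair_intble hmeas hindep hlaw hjk 1 1).congr
            (ae_of_all _ fun ω => by ring))
          (fg_Iint hmeas hlaw 2 i)).congr (ae_of_all _ fun ω => by simp)

lemma fg_hE4 (hmeas : ∀ i, Measurable fun ω => v ω i)
    (hindep : iIndepFun (m := fun _ => Real.measurableSpace) (fun i ω => v ω i) μ)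
    (hlaw : ∀ i, Measure.map (fun ω => v ω i) μ = gaussianReal 0 1) (i j k : Fin n) :
    ∫ ω, v ω j * v ω k * (v ω i)^2 ∂μ
      = if j = k then (if j = i then 3 else 1) else 0 := by
  rcases eq_or_ne j k with rfl | hjk
  · rcases eq_or_ne j i with rfl | hji
    · simp only [if_pos rfl]
      have h : (fun ω => v ω j * v ω j * (v ω j)^2) = fun ω => (v ω j)^4 := by ext ω; ring
      rw [show (∫ ω, v ω j * v ω j * (v ω j)^2 ∂μ) = ∫ ω, (v ω j)^4 ∂μ from by rw [← h],
        fg_Emom hmeas hlaw 4 j, fg_moment_four]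
      norm_num
    · simp only [if_pos rfl, if_neg hji]
      have h : (fun ω => v ω j * v ω j * (v ω i)^2) = fun ω => (v ω j)^2 * (v ω i)^2 := by
        ext ω; ring
      rw [show (∫ ω, v ω j * v ω j * (v ω i)^2 ∂μ) = ∫ ω, (v ω j)^2 * (v ω i)^2 ∂μ from by
          rw [← h],
        fg_pair_int hmeas hindep hlaw hji 2 2, fg_moment_two, one_mul]
      norm_num
  · simp only [if_neg hjk]
    rcases eq_or_ne i j with rfl | hij
    · have h : (fun ω => v ω i * v ω k * (v ω i)^2) = fun ω => (v ω i)^3 * (v ω k)^1 := by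
        ext ω; ring
      rw [show (∫ ω, v ω i * v ω k * (v ω i)^2 ∂μ) = ∫ ω, (v ω i)^3 * (v ω k)^1 ∂μ from by
          rw [← h],
        fg_pair_int hmeas hindep hlaw hjk 3 1, fg_moment_odd 3 (by decide), zero_mul]
    · rcases eq_or_ne i k with rfl | hik
      · have h : (fun ω => v ω j * v ω i * (v ω i)^2) = fun ω => (v ω j)^1 * (v ω i)^3 := by
          ext ω; ring
        rw [show (∫ ω, v ω j * v ω i * (v ω i)^2 ∂μ) = ∫ ω, (v ω j)^1 * (v ω i)^3 ∂μ from by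
            rw [← h],
          fg_pair_int hmeas hindep hlaw hjk 1 3, fg_moment_odd 3 (by decide), mul_zero]
      · rw [(fg_triple_indep hmeas hindep (Ne.symm hij) (Ne.symm hik)).integral_fun_mul_eq_mul_integral
          ((hmeas j).mul (hmeas k)).aestronglyMeasurable
          ((hmeas i).pow_const 2).aestronglyMeasurable]
        have h : (fun ω => v ω j * v ω k) = fun ω => (v ω j)^1 * (v ω k)^1 := by ext ω; ring
        rw [show (∫ ω, v ω j * v ω k ∂μ) = ∫ ω, (v ω j)^1 * (v ω k)^1 ∂μ from by rw [← h],
          fg_pair_int hmeas hindep hlaw hjk 1 1, fg_moment_odd 1 odd_one]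
        simp

end OmegaSide


/-- For `f(θ) = ½‖θ‖²` (so `∇f(θ) = θ`), the forward gradient update
`θ' = θ − η (θ·v) v` with `v ~ N(0, I_n)` satisfies
`E[‖θ'‖²] = (1 − 2η + η²(n+2)) ‖θ‖²`; in particular for
`0 < η < 2/(n+2)` the iteration contracts in expectation. -/
theorem forward_gradient_quadratic_contraction
    {Ω : Type*} [MeasurableSpace Ω] {μ : Measure Ω} [IsProbabilityMeasure μ]
    {n : ℕ} (θ : Fin n → ℝ) (η : ℝ) (hη : 0 < η) (v : Ω → Fin n → ℝ)
    (hmeas : ∀ i, Measurable fun ω => v ω i)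
    (hindep : iIndepFun (m := fun _ => Real.measurableSpace) (fun i ω => v ω i) μ)
    (hlaw : ∀ i, Measure.map (fun ω => v ω i) μ = gaussianReal 0 1) :
    (∫ ω, ∑ i, (θ i - η * (∑ j, θ j * v ω j) * v ω i) ^ 2 ∂μ
        = (1 - 2 * η + η ^ 2 * ((n : ℝ) + 2)) * ∑ i, (θ i) ^ 2)
    ∧ (η < 2 / ((n : ℝ) + 2) → θ ≠ 0 →
        ∫ ω, ∑ i, (θ i - η * (∑ j, θ j * v ω j) * v ω i) ^ 2 ∂μ
          < ∑ i, (θ i) ^ 2) := by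
  have hint2 := fg_hint2 hmeas hindep hlaw
  have hint4 := fg_hint4 hmeas hindep hlaw
  have hE2 := fg_hE2 hmeas hindep hlaw
  have hE4 := fg_hE4 hmeas hindep hlaw
  have key : ∫ ω, ∑ i, (θ i - η * (∑ j, θ j * v ω j) * v ω i) ^ 2 ∂μ
      = (1 - 2 * η + η ^ 2 * ((n : ℝ) + 2)) * ∑ i, (θ i) ^ 2 := by
    have hpt : (fun ω => ∑ i, (θ i - η * (∑ j, θ j * v ω j) * v ω i) ^ 2)
        = fun ω => ((∑ i, (θ i)^2)
            - 2*η * (∑ i, ∑ j, θ i * θ j * (v ω i * v ω j)))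
            + η^2 * (∑ i, ∑ j, ∑ k, θ j * θ k * (v ω j * v ω k * (v ω i)^2)) := by
      funext ω
      set S := ∑ j, θ j * v ω j with hS
      have hA : ∑ i, ∑ j, θ i * θ j * (v ω i * v ω j) = S * S := by
        rw [hS, Finset.sum_mul_sum]
        exact Finset.sum_congr rfl fun i _ => Finset.sum_congr rfl fun j _ => by ring
      have hB : ∀ i : Fin n, ∑ j, ∑ k, θ j * θ k * (v ω j * v ω k * (v ω i)^2)
          = S * S * (v ω i)^2 := by
        intro i
        rw [hS, Finset.sum_mul_sum, Finset.sum_mul]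
        refine Finset.sum_congr rfl fun j _ => ?_
        rw [Finset.sum_mul]
        exact Finset.sum_congr rfl fun k _ => by ring
      rw [hA]
      simp only [hB]
      have expand : ∀ i : Fin n, (θ i - η * S * v ω i)^2
          = θ i^2 - 2*η*(θ i * v ω i * S) + η^2 * (S*S*(v ω i)^2) := fun i => by ring
      simp only [expand]
      rw [Finset.sum_add_distrib, Finset.sum_sub_distrib, ← Finset.mul_sum, ← Finset.mul_sum,
        ← Finset.sum_mul, ← hS]
    rw [hpt]
    have hI2 : Integrable (fun ω => ∑ i, ∑ j, θ i * θ j * (v ω i * v ω j)) μ :=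
      integrable_finset_sum _ fun i _ => integrable_finset_sum _ fun j _ =>
        (hint2 i j).const_mul _
    have hI4 : Integrable
        (fun ω => ∑ i, ∑ j, ∑ k, θ j * θ k * (v ω j * v ω k * (v ω i)^2)) μ :=
      integrable_finset_sum _ fun i _ => integrable_finset_sum _ fun j _ =>
        integrable_finset_sum _ fun k _ => (hint4 i j k).const_mul _
    have hIa : Integrable (fun ω => (∑ i, (θ i)^2)
        - 2*η * (∑ i, ∑ j, θ i * θ j * (v ω i * v ω j))) μ :=
      (integrable_const _).sub (hI2.const_mul _)
    have hIb : Integrable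
        (fun ω => η^2 * (∑ i, ∑ j, ∑ k, θ j * θ k * (v ω j * v ω k * (v ω i)^2))) μ :=
      hI4.const_mul _
    rw [integral_add hIa hIb,
      integral_sub (integrable_const _) (hI2.const_mul _), integral_const,
      integral_const_mul, integral_const_mul]
    have e2 : ∫ ω, ∑ i, ∑ j, θ i * θ j * (v ω i * v ω j) ∂μ = ∑ i, (θ i)^2 := by
      rw [integral_finset_sum _ fun i _ => integrable_finset_sum _ fun j _ =>
        (hint2 i j).const_mul _]
      have h1 : ∀ i : Fin n, ∫ ω, ∑ j, θ i * θ j * (v ω i * v ω j) ∂μ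
          = ∑ j, θ i * θ j * (if i = j then (1:ℝ) else 0) := by
        intro i
        rw [integral_finset_sum _ fun j _ => (hint2 i j).const_mul _]
        exact Finset.sum_congr rfl fun j _ => by rw [integral_const_mul, hE2 i j]
      simp only [h1, mul_ite, mul_one, mul_zero, Finset.sum_ite_eq, Finset.mem_univ, if_true]
      exact Finset.sum_congr rfl fun i _ => by ring
    have e4 : ∫ ω, ∑ i, ∑ j, ∑ k, θ j * θ k * (v ω j * v ω k * (v ω i)^2) ∂μ
        = ((n:ℝ) + 2) * ∑ i, (θ i)^2 := by
      rw [integral_finset_sum _ fun i _ => integrable_finset_sum _ fun j _ =>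
        integrable_finset_sum _ fun k _ => (hint4 i j k).const_mul _]
      have h1 : ∀ i : Fin n, ∫ ω, ∑ j, ∑ k, θ j * θ k * (v ω j * v ω k * (v ω i)^2) ∂μ
          = (∑ j, (θ j)^2) + 2 * (θ i)^2 := by
        intro i
        rw [integral_finset_sum _ fun j _ => integrable_finset_sum _ fun k _ =>
          (hint4 i j k).const_mul _]
        have h2 : ∀ j : Fin n, ∫ ω, ∑ k, θ j * θ k * (v ω j * v ω k * (v ω i)^2) ∂μ
            = ∑ k, θ j * θ k * (if j = k then (if j = i then (3:ℝ) else 1) else 0) := by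
          intro j
          rw [integral_finset_sum _ fun k _ => (hint4 i j k).const_mul _]
          exact Finset.sum_congr rfl fun k _ => by rw [integral_const_mul, hE4 i j k]
        simp only [h2, mul_ite, mul_zero, Finset.sum_ite_eq, Finset.mem_univ, if_true]
        have h3 : ∀ j : Fin n, (if j = i then θ j * θ j * 3 else θ j * θ j * 1)
            = (θ j)^2 + (if j = i then 2 * (θ j)^2 else 0) := by
          intro j; split_ifs <;> ring
        rw [Finset.sum_congr rfl fun j _ => h3 j, Finset.sum_add_distrib,
          Finset.sum_ite_eq' Finset.univ i fun j => 2 * (θ j)^2]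
        simp
      simp only [h1]
      rw [Finset.sum_add_distrib, Finset.sum_const, Finset.card_univ, Fintype.card_fin,
        ← Finset.mul_sum, nsmul_eq_mul]
      ring
    rw [e2, e4]
    simp only [probReal_univ, measure_univ, ENNReal.toReal_one, smul_eq_mul, one_mul]
    ring
  refine ⟨key, fun hlt hne => ?_⟩
  rw [key]
  have hSpos : 0 < ∑ i, (θ i)^2 := by
    obtain ⟨i, hi⟩ : ∃ i, θ i ≠ 0 := by
      by_contra h; push_neg at h; exact hne (funext h)
    exact Finset.sum_pos' (fun j _ => sq_nonneg _) ⟨i, Finset.mem_univ i, by positivity⟩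
  have hn2 : (0:ℝ) < (n:ℝ) + 2 := by positivity
  have h1 : η * ((n:ℝ) + 2) < 2 := (lt_div_iff₀ hn2).mp hlt
  have hcoef : 1 - 2*η + η^2*((n:ℝ)+2) < 1 := by nlinarith
  nlinarith [mul_lt_mul_of_pos_right hcoef hSpos]
end
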